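/- For λ ∈ ℂ∖{0}, define T(λ) = |λ−1|²·log(|λ|²)/(|λ|²−1) when |λ| ≠ 1, and T(λ) = |λ−1|² when |λ| = 1 (filling in the removable singularity, since log(r)/(r−1) → 1 as r → 1). For t > 0 define f_t(λ) = λ·exp((t/2)·(1+λ)/(1−λ)) for λ ≠ 1. Then for every λ ∈ ℂ∖{0,1} with T(λ) = t, one has |f_t(λ)| = 1; that is, f_t maps the boundary set {λ : T(λ) = t} of the domain Σ_t into the unit circle. -/

import Mathlib

/-- Biane's function `T(λ) = |λ−1|²·log(|λ|²)/(|λ|²−1)`, with the removable singularity at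
`|λ| = 1` filled in by `T(λ) = |λ−1|²`. -/
noncomputable def bianeT (lam : ℂ) : ℝ :=
  if ‖lam‖ = 1 then ‖lam - 1‖ ^ 2
  else ‖lam - 1‖ ^ 2 * Real.log (‖lam‖ ^ 2) / (‖lam‖ ^ 2 - 1)

/-- The map `f_t(λ) = λ·e^{(t/2)(1+λ)/(1−λ)}` sends the boundary set `{λ : T(λ) = t}` of the
domain `Σ_t` into the unit circle. -/
theorem ft_maps_boundary_to_circle (t : ℝ) (ht : 0 < t) (lam : ℂ)
    (h0 : lam ≠ 0) (h1 : lam ≠ 1) (hT : bianeT lam = t) :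
    ‖lam * Complex.exp ((t / 2 : ℂ) * (1 + lam) / (1 - lam))‖ = 1 := by
  have hre : ((t / 2 : ℂ) * (1 + lam) / (1 - lam)).re
      = (t/2) * ((1 - Complex.normSq lam) / Complex.normSq (1 - lam)) := by
    rw [mul_div_assoc]
    have : ((t / 2 : ℂ)) = ((t/2 : ℝ) : ℂ) := by push_cast; ring
    rw [this, Complex.re_ofReal_mul, Complex.div_re, ← add_div]
    congr 1
    simp [Complex.normSq_apply]
    ring
  have habspos : 0 < ‖lam‖ := by simpa using h0
  have hd : Complex.normSq (1 - lam) ≠ 0 := by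
    simpa [sub_eq_zero] using fun h => h1 h.symm
  have hdq : Complex.normSq (1 - lam) = ‖lam - 1‖ ^ 2 := by
    rw [← Complex.sq_norm, ← neg_sub lam 1, norm_neg]
  have hs : Complex.normSq lam = ‖lam‖ ^ 2 := (Complex.sq_norm lam).symm
  rw [norm_mul, Complex.norm_exp, hre]
  by_cases hone : ‖lam‖ = 1
  · have : Complex.normSq lam = 1 := by rw [hs, hone]; norm_num
    simp [this, hone]
  · -- |λ| ≠ 1
    have ht' : t = ‖lam - 1‖ ^ 2 * Real.log (‖lam‖ ^ 2) / (‖lam‖ ^ 2 - 1) := by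
      rw [← hT, bianeT, if_neg hone]
    have hsne : ‖lam‖ ^ 2 - 1 ≠ 0 := by
      intro h
      have : ‖lam‖ ^ 2 = 1 := by linarith
      have := abs_eq_abs.mpr (Or.inl (by nlinarith [habspos] : ‖lam‖ = 1))
      exact hone (by nlinarith [habspos])
    have hd1 : ‖lam - 1‖ ^ 2 ≠ 0 := by rw [← hdq]; exact hd
    have key : (t/2) * ((1 - Complex.normSq lam) / Complex.normSq (1 - lam))
        = - Real.log (‖lam‖) := by
      rw [ht', hdq, hs, Real.log_pow]
      have hd2 : ‖lam - 1‖ ≠ 0 := fun h => hd1 (by rw [h]; norm_num)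
      field_simp
      ring
    rw [key, Real.exp_neg, Real.exp_log habspos]
    field_simp
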